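/- Let a ≠ 0 and m₁, m₂, f ∈ ℝ, m̂ᵢ = √(1+a²)·mᵢ. On the open set Ω = {(x̃,ỹ,u,v) ∈ ℝ⁴ : (x̃,ỹ) ∉ {(0,a),(0,−a)}} define E_pl := (u² + v²/(1+a²))/2 − f(x̃² + ỹ²/(1+a²)) − m₁/√(x̃² + (ỹ−a)²/(1+a²)) − m₂/√(x̃² + (ỹ+a)²/(1+a²)) and E_sp := [(1+ỹ²)u² − 2x̃ỹuv + (1+x̃²)v²]/2 − m̂₁(aỹ+1)/√((ỹ−a)² + (1+a²)x̃²) − m̂₂(1−aỹ)/√((ỹ+a)² + (1+a²)x̃²) − f(x̃² + ỹ²). Let P(x̃,ỹ,u,v) := u·(−x̃ỹu + (x̃²+1)v) − (v/(1+a²))·((ỹ²+1)u − x̃ỹv). Then: (i) at every point of Ω where P ≠ 0, the gradients (in ℝ⁴) of E_pl and E_sp are linearly independent; (ii) since a ≠ 0, the polynomial P is not identically zero, so the set {P ≠ 0} is open and dense in ℝ⁴. Consequently E_pl and E_sp are functionally independent. -/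

import Mathlib

noncomputable section

/-- Energy of the planar Lagrange problem with parameters `m₁, m₂, f`, Kepler
centers `(0, ±a)`, Hooke center at the origin, in the metric `dx² + dy²/(1+a²)`,
as a function of `(x̃, ỹ, u, v) ∈ ℝ⁴`. -/
def Epl4 (a m₁ m₂ f : ℝ) (p : ℝ × ℝ × ℝ × ℝ) : ℝ :=
  (p.2.2.1 ^ 2 + p.2.2.2 ^ 2 / (1 + a ^ 2)) / 2
    - f * (p.1 ^ 2 + p.2.1 ^ 2 / (1 + a ^ 2))
    - m₁ / Real.sqrt (p.1 ^ 2 + (p.2.1 - a) ^ 2 / (1 + a ^ 2))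
    - m₂ / Real.sqrt (p.1 ^ 2 + (p.2.1 + a) ^ 2 / (1 + a ^ 2))

/-- Energy of the corresponding spherical Lagrange problem in the gnomonic
chart, as a function of `(x̃, ỹ, u, v) ∈ ℝ⁴`. -/
def Esp4 (a mhat₁ mhat₂ f : ℝ) (p : ℝ × ℝ × ℝ × ℝ) : ℝ :=
  ((1 + p.2.1 ^ 2) * p.2.2.1 ^ 2 - 2 * p.1 * p.2.1 * p.2.2.1 * p.2.2.2
      + (1 + p.1 ^ 2) * p.2.2.2 ^ 2) / 2
    - mhat₁ * (a * p.2.1 + 1) / Real.sqrt ((p.2.1 - a) ^ 2 + (1 + a ^ 2) * p.1 ^ 2)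
    - mhat₂ * (1 - a * p.2.1) / Real.sqrt ((p.2.1 + a) ^ 2 + (1 + a ^ 2) * p.1 ^ 2)
    - f * (p.1 ^ 2 + p.2.1 ^ 2)

/-- The determinant of the `2 × 2` submatrix of the Jacobi matrix of
`(E_pl, E_sp)` formed by the velocity partial derivatives. -/
def Pdet (a : ℝ) (p : ℝ × ℝ × ℝ × ℝ) : ℝ :=
  p.2.2.1 * (-p.1 * p.2.1 * p.2.2.1 + (p.1 ^ 2 + 1) * p.2.2.2)
    - (p.2.2.2 / (1 + a ^ 2)) * ((p.2.1 ^ 2 + 1) * p.2.2.1 - p.1 * p.2.1 * p.2.2.2)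

/-- Evaluate `fderiv` along a line direction via a 1-D derivative computation. -/
lemma fderiv_line {F : ℝ × ℝ × ℝ × ℝ → ℝ} {p e : ℝ × ℝ × ℝ × ℝ}
    (hF : DifferentiableAt ℝ F p) {c : ℝ}
    (h : HasDerivAt (fun t : ℝ => F (p + t • e)) c 0) : fderiv ℝ F p e = c := by
  have hγ : HasDerivAt (fun t : ℝ => p + t • e) e 0 := by
    simpa using ((hasDerivAt_id (0 : ℝ)).smul_const e).const_add p
  have h2 : HasDerivAt (fun t : ℝ => F (p + t • e)) (fderiv ℝ F p e) 0 :=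
    hF.hasFDerivAt.comp_hasDerivAt_of_eq 0 hγ (by simp)
  exact h2.unique h

/-- Differentiability of the planar energy away from the Kepler centers. -/
lemma diff_Epl4 (a m₁ m₂ f : ℝ) (x y u v : ℝ)
    (hs1 : (0:ℝ) < x ^ 2 + (y - a) ^ 2 / (1 + a ^ 2))
    (hs2 : (0:ℝ) < x ^ 2 + (y + a) ^ 2 / (1 + a ^ 2)) :
    DifferentiableAt ℝ (Epl4 a m₁ m₂ f) (x, y, u, v) := by
  have hsq1 : Real.sqrt (x ^ 2 + (y - a) ^ 2 / (1 + a ^ 2)) ≠ 0 := (Real.sqrt_pos.mpr hs1).ne'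
  have hsq2 : Real.sqrt (x ^ 2 + (y + a) ^ 2 / (1 + a ^ 2)) ≠ 0 := (Real.sqrt_pos.mpr hs2).ne'
  unfold Epl4
  simp only [div_eq_mul_inv]
  have d1 : DifferentiableAt ℝ
      (fun p : ℝ × ℝ × ℝ × ℝ => p.1 ^ 2 + (p.2.1 - a) ^ 2 * (1 + a ^ 2)⁻¹) (x, y, u, v) := by
    fun_prop
  have d2 : DifferentiableAt ℝ
      (fun p : ℝ × ℝ × ℝ × ℝ => p.1 ^ 2 + (p.2.1 + a) ^ 2 * (1 + a ^ 2)⁻¹) (x, y, u, v) := by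
    fun_prop
  have hs1' : x ^ 2 + (y - a) ^ 2 * (1 + a ^ 2)⁻¹ ≠ 0 := by
    rw [← div_eq_mul_inv]; exact hs1.ne'
  have hs2' : x ^ 2 + (y + a) ^ 2 * (1 + a ^ 2)⁻¹ ≠ 0 := by
    rw [← div_eq_mul_inv]; exact hs2.ne'
  have hsq1' : Real.sqrt (x ^ 2 + (y - a) ^ 2 * (1 + a ^ 2)⁻¹) ≠ 0 := by
    rw [← div_eq_mul_inv]; exact hsq1
  have hsq2' : Real.sqrt (x ^ 2 + (y + a) ^ 2 * (1 + a ^ 2)⁻¹) ≠ 0 := by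
    rw [← div_eq_mul_inv]; exact hsq2
  have dq1 : DifferentiableAt ℝ
      (fun p : ℝ × ℝ × ℝ × ℝ =>
        m₁ * (Real.sqrt (p.1 ^ 2 + (p.2.1 - a) ^ 2 * (1 + a ^ 2)⁻¹))⁻¹) (x, y, u, v) :=
    ((d1.sqrt hs1').inv hsq1').const_mul m₁
  have dq2 : DifferentiableAt ℝ
      (fun p : ℝ × ℝ × ℝ × ℝ =>
        m₂ * (Real.sqrt (p.1 ^ 2 + (p.2.1 + a) ^ 2 * (1 + a ^ 2)⁻¹))⁻¹) (x, y, u, v) :=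
    ((d2.sqrt hs2').inv hsq2').const_mul m₂
  exact DifferentiableAt.sub (DifferentiableAt.sub (by fun_prop) dq1) dq2

/-- Differentiability of the spherical energy away from the Kepler centers. -/
lemma diff_Esp4 (a mhat₁ mhat₂ f : ℝ) (x y u v : ℝ)
    (hs3 : (0:ℝ) < (y - a) ^ 2 + (1 + a ^ 2) * x ^ 2)
    (hs4 : (0:ℝ) < (y + a) ^ 2 + (1 + a ^ 2) * x ^ 2) :
    DifferentiableAt ℝ (Esp4 a mhat₁ mhat₂ f) (x, y, u, v) := by
  have hsq3 : Real.sqrt ((y - a) ^ 2 + (1 + a ^ 2) * x ^ 2) ≠ 0 := (Real.sqrt_pos.mpr hs3).ne'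
  have hsq4 : Real.sqrt ((y + a) ^ 2 + (1 + a ^ 2) * x ^ 2) ≠ 0 := (Real.sqrt_pos.mpr hs4).ne'
  unfold Esp4
  simp only [div_eq_mul_inv]
  have d3 : DifferentiableAt ℝ
      (fun p : ℝ × ℝ × ℝ × ℝ => (p.2.1 - a) ^ 2 + (1 + a ^ 2) * p.1 ^ 2) (x, y, u, v) := by
    fun_prop
  have d4 : DifferentiableAt ℝ
      (fun p : ℝ × ℝ × ℝ × ℝ => (p.2.1 + a) ^ 2 + (1 + a ^ 2) * p.1 ^ 2) (x, y, u, v) := by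
    fun_prop
  have dq3 : DifferentiableAt ℝ
      (fun p : ℝ × ℝ × ℝ × ℝ =>
        mhat₁ * (a * p.2.1 + 1) *
          (Real.sqrt ((p.2.1 - a) ^ 2 + (1 + a ^ 2) * p.1 ^ 2))⁻¹) (x, y, u, v) :=
    DifferentiableAt.mul (by fun_prop) ((d3.sqrt hs3.ne').inv hsq3)
  have dq4 : DifferentiableAt ℝ
      (fun p : ℝ × ℝ × ℝ × ℝ =>
        mhat₂ * (1 - a * p.2.1) *
          (Real.sqrt ((p.2.1 + a) ^ 2 + (1 + a ^ 2) * p.1 ^ 2))⁻¹) (x, y, u, v) :=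
    DifferentiableAt.mul (by fun_prop) ((d4.sqrt hs4.ne').inv hsq4)
  exact DifferentiableAt.sub (DifferentiableAt.sub (DifferentiableAt.sub (by fun_prop) dq3) dq4)
    (by fun_prop)

set_option maxHeartbeats 2000000

/-- Functional independence of the planar and spherical Lagrange energies:
(i) wherever `P ≠ 0` (on the domain avoiding the Kepler centers) the gradients
of `E_pl` and `E_sp` are linearly independent; (ii) since `a ≠ 0`, `P` is not
identically zero, and the set `{P ≠ 0}` is open and dense in `ℝ⁴`. -/
theorem planar_spherical_energies_functionally_independent
    (a m₁ m₂ f mhat₁ mhat₂ : ℝ) (ha : a ≠ 0)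
    (hm₁ : mhat₁ = Real.sqrt (1 + a ^ 2) * m₁)
    (hm₂ : mhat₂ = Real.sqrt (1 + a ^ 2) * m₂) :
    (∀ p : ℝ × ℝ × ℝ × ℝ, (p.1, p.2.1) ≠ ((0 : ℝ), a) → (p.1, p.2.1) ≠ ((0 : ℝ), -a) →
        Pdet a p ≠ 0 →
        LinearIndependent ℝ
          ![fderiv ℝ (Epl4 a m₁ m₂ f) p, fderiv ℝ (Esp4 a mhat₁ mhat₂ f) p])
      ∧ (¬ ∀ p : ℝ × ℝ × ℝ × ℝ, Pdet a p = 0)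
      ∧ IsOpen {p : ℝ × ℝ × ℝ × ℝ | Pdet a p ≠ 0}
      ∧ Dense {p : ℝ × ℝ × ℝ × ℝ | Pdet a p ≠ 0} := by
  have hA : (0:ℝ) < 1 + a ^ 2 := by positivity
  have ha2 : (0:ℝ) < a ^ 2 := by positivity
  refine ⟨?_, ?_, ?_, ?_⟩
  · -- part (i): linear independence of the gradients where P ≠ 0
    rintro ⟨x, y, u, v⟩ hne1 hne2 hP
    simp only [ne_eq, Prod.mk.injEq, not_and] at hne1 hne2
    -- positivity of the square-root arguments
    have hs1 : (0:ℝ) < x ^ 2 + (y - a) ^ 2 / (1 + a ^ 2) := by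
      rcases eq_or_ne x 0 with hx | hx
      · have hy : y - a ≠ 0 := sub_ne_zero.mpr (hne1 hx)
        positivity
      · positivity
    have hs2 : (0:ℝ) < x ^ 2 + (y + a) ^ 2 / (1 + a ^ 2) := by
      rcases eq_or_ne x 0 with hx | hx
      · have hy : y + a ≠ 0 := by
          intro h; exact (hne2 hx) (by linarith)
        positivity
      · positivity
    have hs3 : (0:ℝ) < (y - a) ^ 2 + (1 + a ^ 2) * x ^ 2 := by
      rcases eq_or_ne x 0 with hx | hx
      · have hy : y - a ≠ 0 := sub_ne_zero.mpr (hne1 hx)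
        positivity
      · positivity
    have hs4 : (0:ℝ) < (y + a) ^ 2 + (1 + a ^ 2) * x ^ 2 := by
      rcases eq_or_ne x 0 with hx | hx
      · have hy : y + a ≠ 0 := by
          intro h; exact (hne2 hx) (by linarith)
        positivity
      · positivity
    have hdpl := diff_Epl4 a m₁ m₂ f x y u v hs1 hs2
    have hdsp := diff_Esp4 a mhat₁ mhat₂ f x y u v hs3 hs4
    -- partial derivatives in the velocity directions
    have keyPlU : fderiv ℝ (Epl4 a m₁ m₂ f) (x, y, u, v) ((0:ℝ), (0:ℝ), (1:ℝ), (0:ℝ)) = u := by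
      apply fderiv_line hdpl
      have hfun : (fun t : ℝ => Epl4 a m₁ m₂ f ((x, y, u, v) + t • ((0:ℝ), (0:ℝ), (1:ℝ), (0:ℝ))))
          = fun t : ℝ => ((u + t) ^ 2 + v ^ 2 / (1 + a ^ 2)) / 2
              - f * (x ^ 2 + y ^ 2 / (1 + a ^ 2))
              - m₁ / Real.sqrt (x ^ 2 + (y - a) ^ 2 / (1 + a ^ 2))
              - m₂ / Real.sqrt (x ^ 2 + (y + a) ^ 2 / (1 + a ^ 2)) := by
        funext t; simp [Epl4]; try ring
      rw [hfun]
      have h0 := (((((((hasDerivAt_id (0:ℝ)).const_add u).pow 2).add_const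
          (v ^ 2 / (1 + a ^ 2))).div_const 2).sub_const
          (f * (x ^ 2 + y ^ 2 / (1 + a ^ 2)))).sub_const
          (m₁ / Real.sqrt (x ^ 2 + (y - a) ^ 2 / (1 + a ^ 2)))).sub_const
          (m₂ / Real.sqrt (x ^ 2 + (y + a) ^ 2 / (1 + a ^ 2)))
      refine h0.congr_deriv ?_
      try simp only [id_eq]
      try push_cast
      try ring
    have keyPlV : fderiv ℝ (Epl4 a m₁ m₂ f) (x, y, u, v) ((0:ℝ), (0:ℝ), (0:ℝ), (1:ℝ))
        = v / (1 + a ^ 2) := by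
      apply fderiv_line hdpl
      have hfun : (fun t : ℝ => Epl4 a m₁ m₂ f ((x, y, u, v) + t • ((0:ℝ), (0:ℝ), (0:ℝ), (1:ℝ))))
          = fun t : ℝ => (u ^ 2 + (v + t) ^ 2 / (1 + a ^ 2)) / 2
              - f * (x ^ 2 + y ^ 2 / (1 + a ^ 2))
              - m₁ / Real.sqrt (x ^ 2 + (y - a) ^ 2 / (1 + a ^ 2))
              - m₂ / Real.sqrt (x ^ 2 + (y + a) ^ 2 / (1 + a ^ 2)) := by
        funext t; simp [Epl4]; try ring
      rw [hfun]
      have h0 := ((((((((hasDerivAt_id (0:ℝ)).const_add v).pow 2).div_const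
          (1 + a ^ 2)).const_add (u ^ 2)).div_const 2).sub_const
          (f * (x ^ 2 + y ^ 2 / (1 + a ^ 2)))).sub_const
          (m₁ / Real.sqrt (x ^ 2 + (y - a) ^ 2 / (1 + a ^ 2)))).sub_const
          (m₂ / Real.sqrt (x ^ 2 + (y + a) ^ 2 / (1 + a ^ 2)))
      refine h0.congr_deriv ?_
      try simp only [id_eq]
      try push_cast
      try ring
    have keySpU : fderiv ℝ (Esp4 a mhat₁ mhat₂ f) (x, y, u, v) ((0:ℝ), (0:ℝ), (1:ℝ), (0:ℝ))
        = (1 + y ^ 2) * u - x * y * v := by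
      apply fderiv_line hdsp
      have hfun : (fun t : ℝ =>
            Esp4 a mhat₁ mhat₂ f ((x, y, u, v) + t • ((0:ℝ), (0:ℝ), (1:ℝ), (0:ℝ))))
          = fun t : ℝ => ((1 + y ^ 2) * (u + t) ^ 2 - (2 * x * y * v) * (u + t)
                + (1 + x ^ 2) * v ^ 2) / 2
              - mhat₁ * (a * y + 1) / Real.sqrt ((y - a) ^ 2 + (1 + a ^ 2) * x ^ 2)
              - mhat₂ * (1 - a * y) / Real.sqrt ((y + a) ^ 2 + (1 + a ^ 2) * x ^ 2)
              - f * (x ^ 2 + y ^ 2) := by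
        funext t; simp [Esp4]; try ring
      rw [hfun]
      have hid := (hasDerivAt_id (0:ℝ)).const_add u
      have h0 := ((((((hid.pow 2).const_mul (1 + y ^ 2)).sub
          (hid.const_mul (2 * x * y * v))).add_const ((1 + x ^ 2) * v ^ 2)).div_const 2).sub_const
          (mhat₁ * (a * y + 1) / Real.sqrt ((y - a) ^ 2 + (1 + a ^ 2) * x ^ 2))).sub_const
          (mhat₂ * (1 - a * y) / Real.sqrt ((y + a) ^ 2 + (1 + a ^ 2) * x ^ 2)) |>.sub_const
          (f * (x ^ 2 + y ^ 2))
      refine h0.congr_deriv ?_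
      try simp only [id_eq]
      try push_cast
      try ring
    have keySpV : fderiv ℝ (Esp4 a mhat₁ mhat₂ f) (x, y, u, v) ((0:ℝ), (0:ℝ), (0:ℝ), (1:ℝ))
        = -(x * y * u) + (1 + x ^ 2) * v := by
      apply fderiv_line hdsp
      have hfun : (fun t : ℝ =>
            Esp4 a mhat₁ mhat₂ f ((x, y, u, v) + t • ((0:ℝ), (0:ℝ), (0:ℝ), (1:ℝ))))
          = fun t : ℝ => ((1 + y ^ 2) * u ^ 2 - (2 * x * y * u) * (v + t)
                + (1 + x ^ 2) * (v + t) ^ 2) / 2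
              - mhat₁ * (a * y + 1) / Real.sqrt ((y - a) ^ 2 + (1 + a ^ 2) * x ^ 2)
              - mhat₂ * (1 - a * y) / Real.sqrt ((y + a) ^ 2 + (1 + a ^ 2) * x ^ 2)
              - f * (x ^ 2 + y ^ 2) := by
        funext t; simp [Esp4]; try ring
      rw [hfun]
      have hid := (hasDerivAt_id (0:ℝ)).const_add v
      have h0 := (((((((hid.pow 2).const_mul (1 + x ^ 2)).sub
          (hid.const_mul (2 * x * y * u))).const_add ((1 + y ^ 2) * u ^ 2)).div_const 2).sub_const
          (mhat₁ * (a * y + 1) / Real.sqrt ((y - a) ^ 2 + (1 + a ^ 2) * x ^ 2))).sub_const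
          (mhat₂ * (1 - a * y) / Real.sqrt ((y + a) ^ 2 + (1 + a ^ 2) * x ^ 2))).sub_const
          (f * (x ^ 2 + y ^ 2))
      have hfun2 : (fun t : ℝ => ((1 + y ^ 2) * u ^ 2 - (2 * x * y * u) * (v + t)
                + (1 + x ^ 2) * (v + t) ^ 2) / 2
              - mhat₁ * (a * y + 1) / Real.sqrt ((y - a) ^ 2 + (1 + a ^ 2) * x ^ 2)
              - mhat₂ * (1 - a * y) / Real.sqrt ((y + a) ^ 2 + (1 + a ^ 2) * x ^ 2)
              - f * (x ^ 2 + y ^ 2))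
          = fun t : ℝ => ((1 + y ^ 2) * u ^ 2 + ((1 + x ^ 2) * (v + t) ^ 2
                - (2 * x * y * u) * (v + t))) / 2
              - mhat₁ * (a * y + 1) / Real.sqrt ((y - a) ^ 2 + (1 + a ^ 2) * x ^ 2)
              - mhat₂ * (1 - a * y) / Real.sqrt ((y + a) ^ 2 + (1 + a ^ 2) * x ^ 2)
              - f * (x ^ 2 + y ^ 2) := by
        funext t; ring
      rw [hfun2]
      refine h0.congr_deriv ?_
      try simp only [id_eq]
      try push_cast
      try ring
    rw [LinearIndependent.pair_iff]
    intro s t hst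
    have h1 := DFunLike.congr_fun hst ((0:ℝ), (0:ℝ), (1:ℝ), (0:ℝ))
    have h2 := DFunLike.congr_fun hst ((0:ℝ), (0:ℝ), (0:ℝ), (1:ℝ))
    simp only [ContinuousLinearMap.add_apply, ContinuousLinearMap.coe_smul', Pi.smul_apply,
      smul_eq_mul, ContinuousLinearMap.zero_apply] at h1 h2
    rw [keyPlU, keySpU] at h1
    rw [keyPlV, keySpV] at h2
    have hPv : u * (-x * y * u + (x ^ 2 + 1) * v)
        - v / (1 + a ^ 2) * ((y ^ 2 + 1) * u - x * y * v) ≠ 0 := by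
      simpa [Pdet] using hP
    constructor
    · have hs0 : s * (u * (-x * y * u + (x ^ 2 + 1) * v)
          - v / (1 + a ^ 2) * ((y ^ 2 + 1) * u - x * y * v)) = 0 := by
        linear_combination (-(x * y * u) + (1 + x ^ 2) * v) * h1 - ((1 + y ^ 2) * u - x * y * v) * h2
      exact (mul_eq_zero.mp hs0).resolve_right hPv
    · have ht0 : t * (u * (-x * y * u + (x ^ 2 + 1) * v)
          - v / (1 + a ^ 2) * ((y ^ 2 + 1) * u - x * y * v)) = 0 := by
        linear_combination u * h2 - (v / (1 + a ^ 2)) * h1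
      exact (mul_eq_zero.mp ht0).resolve_right hPv
  · -- part (ii): P is not identically zero
    intro hall
    have h := hall ((0:ℝ), (0:ℝ), (1:ℝ), (1:ℝ))
    simp only [Pdet] at h
    norm_num at h
    have h2 : (1 + a ^ 2) * (1 - (1 + a ^ 2)⁻¹) = 0 := by rw [h, mul_zero]
    rw [mul_sub, mul_inv_cancel₀ hA.ne'] at h2
    nlinarith [h2, ha2]
  · -- part (iii): openness
    have hc : Continuous (Pdet a) := by
      unfold Pdet
      fun_prop
    exact (isClosed_eq hc continuous_const).isOpen_compl
  · -- part (iv): density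
    rw [Metric.dense_iff]
    rintro ⟨x, y, u, v⟩ r hr
    set q : Polynomial ℝ :=
      Polynomial.C (-(u*v) + u*v*(1+a^2) - y^2*u*v + x*y*v^2 - x*y*u^2*(1+a^2) + x^2*u*v*(1+a^2))
        + Polynomial.C (-v + v*(1+a^2) - u + u*(1+a^2) + y*v^2 - y*u^2*(1+a^2) - y^2*v - y^2*u + 2*x*u*v*(1+a^2)
            + 2*x*y*v - 2*x*y*u*(1+a^2) + x^2*v*(1+a^2) + x^2*u*(1+a^2)) * Polynomial.X
        + Polynomial.C (-1 + (1+a^2) + u*v*(1+a^2) + 2*y*v - 2*y*u*(1+a^2) - y^2 + 2*x*v*(1+a^2) + 2*x*u*(1+a^2) + x*y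
            - x*y*(1+a^2) + x^2*(1+a^2)) * Polynomial.X ^ 2
        + Polynomial.C (v*(1+a^2) + u*(1+a^2) + y - y*(1+a^2) + 2*x*(1+a^2)) * Polynomial.X ^ 3
        + Polynomial.C (1+a^2) * Polynomial.X ^ 4 with hqdef
    have hq4 : q.coeff 4 = 1 + a ^ 2 := by
      simp only [hqdef, Polynomial.coeff_add, Polynomial.coeff_C_mul, Polynomial.coeff_X_pow,
        Polynomial.coeff_X, Polynomial.coeff_C]
      norm_num
    have hqne : q ≠ 0 := by
      intro h
      rw [h] at hq4
      simp only [Polynomial.coeff_zero] at hq4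
      linarith
    have hfin := Polynomial.finite_setOf_isRoot hqne
    obtain ⟨t, ht, hroot⟩ : ∃ t ∈ Set.Ioo (0:ℝ) r, ¬ q.IsRoot t := by
      by_contra hcon
      push_neg at hcon
      exact (Set.Ioo_infinite hr) (hfin.subset hcon)
    have heval : Polynomial.eval t q = (1 + a ^ 2) * Pdet a (x + t, y, u + t, v + t) := by
      simp only [hqdef, Pdet, Polynomial.eval_add, Polynomial.eval_mul, Polynomial.eval_pow,
        Polynomial.eval_C, Polynomial.eval_X]
      field_simp
      ring
    refine ⟨(x + t, y, u + t, v + t), ?_, ?_⟩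
    · rw [Metric.mem_ball]
      have habs : |t| < r := by
        rw [abs_of_pos ht.1]; exact ht.2
      simp only [Prod.dist_eq, Real.dist_eq]
      rw [show x + t - x = t by ring, show (y:ℝ) - y = 0 by ring,
        show u + t - u = t by ring, show v + t - v = t by ring]
      exact max_lt habs (max_lt (by simpa using hr) (max_lt habs habs))
    · intro h0
      apply hroot
      rw [Polynomial.IsRoot, heval, h0, mul_zero]
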